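/- arXiv:0706.0073 — 2 statements merged into one kernel-verified Lean document; each statement's English description precedes it below -/
import Mathlib

section
/- In the first-order polynomial DLM, for distinct sites i ≠ j and all distinct times s ≠ t (s, t ≥ 1), the same-time correlation strictly exceeds the cross-time correlation: Cor(y_{it}, y_{jt}) > Cor(y_{it}, y_{js}). -/
open MeasureTheory Filter

/-- Covariance of two real random variables: `Cov(X,Y) = E[XY] - E[X]E[Y]`. -/
noncomputable def cov {Ω : Type*} [MeasurableSpace Ω] (μ : Measure Ω) (X Y : Ω → ℝ) : ℝ :=
  (∫ ω, X ω * Y ω ∂μ) - (∫ ω, X ω ∂μ) * (∫ ω, Y ω ∂μ)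

/-- Correlation of two real random variables. -/
noncomputable def corr {Ω : Type*} [MeasurableSpace Ω] (μ : Measure Ω) (X Y : Ω → ℝ) : ℝ :=
  cov μ X Y / (Real.sqrt (cov μ X X) * Real.sqrt (cov μ Y Y))

section Aux

variable {Ω : Type*} [MeasurableSpace Ω] {μ : Measure Ω} [IsProbabilityMeasure μ]

lemma int_mul {X Y : Ω → ℝ} (hX : MemLp X 2 μ) (hY : MemLp Y 2 μ) :
    Integrable (fun ω => X ω * Y ω) μ := by
  have h : MemLp (X • Y) 1 μ := by
    haveI : ENNReal.HolderTriple 2 2 1 := ⟨by rw [ENNReal.inv_two_add_inv_two, inv_one]⟩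
    exact hY.smul hX
  rw [← memLp_one_iff_integrable]
  exact h

lemma cov_comm' (X Y : Ω → ℝ) : cov μ X Y = cov μ Y X := by
  simp only [cov]
  rw [mul_comm (∫ ω, X ω ∂μ) _]
  congr 1
  exact integral_congr_ae (Filter.Eventually.of_forall fun ω => mul_comm _ _)

lemma cov_add_left' {X Y Z : Ω → ℝ} (hX : MemLp X 2 μ) (hY : MemLp Y 2 μ)
    (hZ : MemLp Z 2 μ) :
    cov μ (fun ω => X ω + Y ω) Z = cov μ X Z + cov μ Y Z := by
  unfold cov
  have h1 : (∫ ω, (X ω + Y ω) * Z ω ∂μ)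
      = (∫ ω, X ω * Z ω ∂μ) + (∫ ω, Y ω * Z ω ∂μ) := by
    rw [← integral_add (int_mul hX hZ) (int_mul hY hZ)]
    congr 1; funext ω; ring
  have h2 : (∫ ω, (X ω + Y ω) ∂μ) = (∫ ω, X ω ∂μ) + (∫ ω, Y ω ∂μ) :=
    integral_add (hX.integrable one_le_two) (hY.integrable one_le_two)
  rw [h1, h2]; ring

lemma cov_add_right' {X Y Z : Ω → ℝ} (hX : MemLp X 2 μ) (hY : MemLp Y 2 μ)
    (hZ : MemLp Z 2 μ) :
    cov μ X (fun ω => Y ω + Z ω) = cov μ X Y + cov μ X Z := by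
  rw [cov_comm' X _, cov_add_left' hY hZ hX, cov_comm' Y X, cov_comm' Z X]

lemma cov_sum_left' {ι : Type*} (A : Finset ι) (f : ι → Ω → ℝ) (Z : Ω → ℝ)
    (hf : ∀ k ∈ A, MemLp (f k) 2 μ) (hZ : MemLp Z 2 μ) :
    cov μ (fun ω => ∑ k ∈ A, f k ω) Z = ∑ k ∈ A, cov μ (f k) Z := by
  classical
  induction A using Finset.induction_on with
  | empty => simp [cov]
  | @insert a A ha ih =>
    have hsum : MemLp (fun ω => ∑ k ∈ A, f k ω) 2 μ :=
      memLp_finset_sum A (fun k hk => hf k (Finset.mem_insert_of_mem hk))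
    calc cov μ (fun ω => ∑ k ∈ insert a A, f k ω) Z
        = cov μ (fun ω => f a ω + ∑ k ∈ A, f k ω) Z := by
          simp only [Finset.sum_insert ha]
      _ = cov μ (f a) Z + cov μ (fun ω => ∑ k ∈ A, f k ω) Z :=
          cov_add_left' (hf a (Finset.mem_insert_self a A)) hsum hZ
      _ = ∑ k ∈ insert a A, cov μ (f k) Z := by
          rw [ih (fun k hk => hf k (Finset.mem_insert_of_mem hk)), Finset.sum_insert ha]

lemma cov_sum_right' {ι : Type*} (A : Finset ι) (f : ι → Ω → ℝ) (Z : Ω → ℝ)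
    (hf : ∀ k ∈ A, MemLp (f k) 2 μ) (hZ : MemLp Z 2 μ) :
    cov μ Z (fun ω => ∑ k ∈ A, f k ω) = ∑ k ∈ A, cov μ Z (f k) := by
  rw [cov_comm', cov_sum_left' A f Z hf hZ]
  exact Finset.sum_congr rfl fun k _ => cov_comm' _ _

lemma cov3 {a b c a' b' c' : Ω → ℝ} (ha : MemLp a 2 μ) (hb : MemLp b 2 μ)
    (hc : MemLp c 2 μ) (ha' : MemLp a' 2 μ) (hb' : MemLp b' 2 μ) (hc' : MemLp c' 2 μ) :
    cov μ (fun ω => a ω + b ω + c ω) (fun ω => a' ω + b' ω + c' ω)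
      = cov μ a a' + cov μ a b' + cov μ a c'
        + (cov μ b a' + cov μ b b' + cov μ b c')
        + (cov μ c a' + cov μ c b' + cov μ c c') := by
  have hab : MemLp (fun ω => a ω + b ω) 2 μ := ha.add hb
  have hR : MemLp (fun ω => a' ω + b' ω + c' ω) 2 μ := (ha'.add hb').add hc'
  calc cov μ (fun ω => a ω + b ω + c ω) (fun ω => a' ω + b' ω + c' ω)
      = cov μ (fun ω => a ω + b ω) (fun ω => a' ω + b' ω + c' ω)
        + cov μ c (fun ω => a' ω + b' ω + c' ω) := cov_add_left' hab hc hR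
    _ = cov μ a (fun ω => a' ω + b' ω + c' ω) + cov μ b (fun ω => a' ω + b' ω + c' ω)
        + cov μ c (fun ω => a' ω + b' ω + c' ω) := by rw [cov_add_left' ha hb hR]
    _ = _ := by
        have expand : ∀ (x : Ω → ℝ), MemLp x 2 μ →
            cov μ x (fun ω => a' ω + b' ω + c' ω)
              = cov μ x a' + cov μ x b' + cov μ x c' := by
          intro x hx
          calc cov μ x (fun ω => (a' ω + b' ω) + c' ω)
              = cov μ x (fun ω => a' ω + b' ω) + cov μ x c' :=
                cov_add_right' hx (ha'.add hb') hc'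
            _ = cov μ x a' + cov μ x b' + cov μ x c' := by
                rw [cov_add_right' hx ha' hb']
        rw [expand a ha, expand b hb, expand c hc]

lemma key_sq_ineq1 (a u c E : ℝ) (ha : 0 < a) (hu : 0 < u) (hc : 0 < c) (hE : 0 < E) :
    a ^ 2 * (a + u + E) < (a + u + c) ^ 2 * (a + E) := by
  nlinarith [mul_pos ha hu, mul_pos hu hE, mul_pos (mul_pos ha hu) (add_pos ha hu),
    mul_pos hc (add_pos ha hE), sq_nonneg (a + u), mul_pos (mul_pos hc hc) (add_pos ha hE),
    mul_pos (mul_pos hc (add_pos ha hu)) (add_pos ha hE)]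

lemma key_sq_ineq2 (a w c E : ℝ) (ha : 0 < a) (hw : 0 < w) (hc : 0 < c) (hE : 0 < E) :
    a ^ 2 * (a + E) < (a + c) ^ 2 * (a + w + E) := by
  nlinarith [mul_pos hc (add_pos ha hE), mul_pos (mul_pos hc hc) (add_pos ha hE),
    mul_pos hw (mul_pos (add_pos ha hc) (add_pos ha hc))]

end Aux

set_option maxHeartbeats 1000000 in
/-- In the first-order polynomial DLM, for distinct sites `i ≠ j` and distinct
times `s ≠ t` (both `≥ 1`), the same-time correlation strictly exceeds the cross-time one:
`Cor(y_{it}, y_{jt}) > Cor(y_{it}, y_{js})`. -/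
theorem same_time_correlation_gt_cross_time
    {Ω : Type*} [MeasurableSpace Ω] (μ : Measure Ω) [IsProbabilityMeasure μ]
    (n : ℕ) (sb2 sd2 se2 lam : ℝ)
    (hb : 0 < sb2) (hd : 0 < sd2) (he : 0 < se2) (hl : 0 < lam)
    (β0 : Ω → ℝ) (δ : ℕ → Ω → ℝ) (ε : Fin (n + 1) → ℕ → Ω → ℝ)
    (d : Fin (n + 1) → Fin (n + 1) → ℝ)
    (hdsymm : ∀ i j, d i j = d j i) (hdnonneg : ∀ i j, 0 ≤ d i j)
    (hddiag : ∀ i, d i i = 0)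
    (hβL2 : MemLp β0 2 μ) (hδL2 : ∀ k, MemLp (δ k) 2 μ)
    (hεL2 : ∀ i t, MemLp (ε i t) 2 μ)
    (hβmean : (∫ ω, β0 ω ∂μ) = 0) (hδmean : ∀ k, (∫ ω, δ k ω ∂μ) = 0)
    (hεmean : ∀ i t, (∫ ω, ε i t ω ∂μ) = 0)
    (hβvar : cov μ β0 β0 = sb2)
    (hδvar : ∀ k, cov μ (δ k) (δ k) = sd2)
    (hεcov : ∀ i j t, cov μ (ε i t) (ε j t) = se2 * Real.exp (-(d i j) / lam))
    (hβδ : ∀ k, cov μ β0 (δ k) = 0)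
    (hδδ : ∀ k l, k ≠ l → cov μ (δ k) (δ l) = 0)
    (hβε : ∀ i t, cov μ β0 (ε i t) = 0)
    (hδε : ∀ k i t, cov μ (δ k) (ε i t) = 0)
    (hεε : ∀ i j t s, t ≠ s → cov μ (ε i t) (ε j s) = 0)
    (y : Fin (n + 1) → ℕ → Ω → ℝ)
    (hy : ∀ i t ω, y i t ω = β0 ω + (∑ k ∈ Finset.Icc 1 t, δ k ω) + ε i t ω) :
    ∀ (i j : Fin (n + 1)), i ≠ j → ∀ (t s : ℕ), 1 ≤ t → 1 ≤ s → s ≠ t →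
      corr μ (y i t) (y j t) > corr μ (y i t) (y j s) := by
  classical
  have hSL2 : ∀ t, MemLp (fun ω => ∑ k ∈ Finset.Icc 1 t, δ k ω) 2 μ :=
    fun t => memLp_finset_sum _ (fun k _ => hδL2 k)
  -- covariance of the sums of δ's
  have hSS : ∀ t s : ℕ,
      cov μ (fun ω => ∑ k ∈ Finset.Icc 1 t, δ k ω) (fun ω => ∑ k ∈ Finset.Icc 1 s, δ k ω)
        = ((min t s : ℕ) : ℝ) * sd2 := by
    intro t s
    rw [cov_sum_left' _ _ _ (fun k _ => hδL2 k) (hSL2 s)]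
    have hinner : ∀ k : ℕ,
        cov μ (δ k) (fun ω => ∑ l ∈ Finset.Icc 1 s, δ l ω)
          = if k ∈ Finset.Icc 1 s then sd2 else 0 := by
      intro k
      rw [cov_sum_right' _ _ _ (fun l _ => hδL2 l) (hδL2 k)]
      by_cases hk : k ∈ Finset.Icc 1 s
      · rw [if_pos hk, Finset.sum_eq_single_of_mem k hk
          (fun l _ hne => hδδ k l (Ne.symm hne)), hδvar k]
      · rw [if_neg hk]
        exact Finset.sum_eq_zero fun l hl => hδδ k l (by rintro rfl; exact hk hl)
    calc (∑ k ∈ Finset.Icc 1 t, cov μ (δ k) (fun ω => ∑ l ∈ Finset.Icc 1 s, δ l ω))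
        = ∑ k ∈ Finset.Icc 1 t, (if k ∈ Finset.Icc 1 s then sd2 else 0) :=
          Finset.sum_congr rfl fun k _ => hinner k
      _ = ∑ k ∈ Finset.Icc 1 t ∩ Finset.Icc 1 s, sd2 := by
          rw [Finset.sum_ite_mem]
      _ = ((min t s : ℕ) : ℝ) * sd2 := by
          have hic : Finset.Icc 1 t ∩ Finset.Icc 1 s = Finset.Icc 1 (min t s) := by
            ext x; simp only [Finset.mem_inter, Finset.mem_Icc]; omega
          rw [hic, Finset.sum_const, Nat.card_Icc]
          simp [nsmul_eq_mul]
  -- full covariance of the observations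
  have key : ∀ (i j : Fin (n + 1)) (t s : ℕ),
      cov μ (y i t) (y j s)
        = sb2 + ((min t s : ℕ) : ℝ) * sd2 + cov μ (ε i t) (ε j s) := by
    intro i j t s
    have hyt : y i t = fun ω => β0 ω + (∑ k ∈ Finset.Icc 1 t, δ k ω) + ε i t ω :=
      funext (hy i t)
    have hys : y j s = fun ω => β0 ω + (∑ k ∈ Finset.Icc 1 s, δ k ω) + ε j s ω :=
      funext (hy j s)
    rw [hyt, hys, cov3 hβL2 (hSL2 t) (hεL2 i t) hβL2 (hSL2 s) (hεL2 j s)]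
    have h12 : cov μ β0 (fun ω => ∑ k ∈ Finset.Icc 1 s, δ k ω) = 0 := by
      rw [cov_sum_right' _ _ _ (fun k _ => hδL2 k) hβL2]
      exact Finset.sum_eq_zero fun k _ => hβδ k
    have h21 : cov μ (fun ω => ∑ k ∈ Finset.Icc 1 t, δ k ω) β0 = 0 := by
      rw [cov_sum_left' _ _ _ (fun k _ => hδL2 k) hβL2]
      exact Finset.sum_eq_zero fun k _ => by rw [cov_comm']; exact hβδ k
    have h23 : cov μ (fun ω => ∑ k ∈ Finset.Icc 1 t, δ k ω) (ε j s) = 0 := by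
      rw [cov_sum_left' _ _ _ (fun k _ => hδL2 k) (hεL2 j s)]
      exact Finset.sum_eq_zero fun k _ => hδε k j s
    have h32 : cov μ (ε i t) (fun ω => ∑ k ∈ Finset.Icc 1 s, δ k ω) = 0 := by
      rw [cov_sum_right' _ _ _ (fun k _ => hδL2 k) (hεL2 i t)]
      exact Finset.sum_eq_zero fun k _ => by rw [cov_comm']; exact hδε k i t
    have h31 : cov μ (ε i t) β0 = 0 := by rw [cov_comm']; exact hβε i t
    rw [hβvar, h12, hβε j s, h21, hSS t s, h23, h31, h32]
    ring
  -- variance of the observations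
  have hvar : ∀ (i : Fin (n + 1)) (t : ℕ),
      cov μ (y i t) (y i t) = sb2 + (t : ℝ) * sd2 + se2 := by
    intro i t
    rw [key i i t t, hεcov i i t, hddiag i]
    simp
  intro i j hij t s ht hs hst
  -- the same-time covariance between sites
  have hcov_same : cov μ (y i t) (y j t)
      = sb2 + (t : ℝ) * sd2 + se2 * Real.exp (-(d i j) / lam) := by
    rw [key i j t t, hεcov i j t]; simp
  have hcov_cross : cov μ (y i t) (y j s)
      = sb2 + ((min t s : ℕ) : ℝ) * sd2 := by
    rw [key i j t s, hεε i j t s (Ne.symm hst)]; ring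
  set e : ℝ := Real.exp (-(d i j) / lam) with he_def
  have he_pos : 0 < e := Real.exp_pos _
  set Vt : ℝ := sb2 + (t : ℝ) * sd2 + se2 with hVt_def
  set Vs : ℝ := sb2 + (s : ℝ) * sd2 + se2 with hVs_def
  set N1 : ℝ := sb2 + (t : ℝ) * sd2 + se2 * e with hN1_def
  set N2 : ℝ := sb2 + ((min t s : ℕ) : ℝ) * sd2 with hN2_def
  have ht0 : (0 : ℝ) ≤ (t : ℝ) := Nat.cast_nonneg t
  have hs0 : (0 : ℝ) ≤ (s : ℝ) := Nat.cast_nonneg s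
  have hm0 : (0 : ℝ) ≤ ((min t s : ℕ) : ℝ) := Nat.cast_nonneg _
  have hVt_pos : 0 < Vt := by positivity
  have hVs_pos : 0 < Vs := by positivity
  have hN1_pos : 0 < N1 := by positivity
  have hN2_pos : 0 < N2 := by positivity
  have hsVt : 0 < Real.sqrt Vt := Real.sqrt_pos.mpr hVt_pos
  have hsVs : 0 < Real.sqrt Vs := Real.sqrt_pos.mpr hVs_pos
  -- the key square comparison
  have hsq : N2 ^ 2 * Vt < N1 ^ 2 * Vs := by
    rcases lt_or_gt_of_ne hst with hlt | hgt
    · -- s < t : min = s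
      have hmin : min t s = s := min_eq_right hlt.le
      have hcast : (s : ℝ) < (t : ℝ) := Nat.cast_lt.mpr hlt
      have := key_sq_ineq1 (sb2 + (s : ℝ) * sd2) ((t : ℝ) * sd2 - (s : ℝ) * sd2)
        (se2 * e) se2 (by positivity) (by nlinarith) (by positivity) he
      rw [hN2_def, hmin, hN1_def, hVt_def, hVs_def]
      nlinarith [this]
    · -- t < s : min = t
      have hmin : min t s = t := min_eq_left hgt.le
      have hcast : (t : ℝ) < (s : ℝ) := Nat.cast_lt.mpr hgt
      have := key_sq_ineq2 (sb2 + (t : ℝ) * sd2) ((s : ℝ) * sd2 - (t : ℝ) * sd2)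
        (se2 * e) se2 (by positivity) (by nlinarith) (by positivity) he
      rw [hN2_def, hmin, hN1_def, hVt_def, hVs_def]
      nlinarith [this]
  -- from squares to square roots
  have hkey : N2 * Real.sqrt Vt < N1 * Real.sqrt Vs := by
    have h1 : N2 * Real.sqrt Vt = Real.sqrt (N2 ^ 2 * Vt) := by
      rw [Real.sqrt_mul (sq_nonneg N2), Real.sqrt_sq hN2_pos.le]
    have h2 : N1 * Real.sqrt Vs = Real.sqrt (N1 ^ 2 * Vs) := by
      rw [Real.sqrt_mul (sq_nonneg N1), Real.sqrt_sq hN1_pos.le]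
    rw [h1, h2]
    exact Real.sqrt_lt_sqrt (by positivity) hsq
  -- conclude
  unfold corr
  rw [hcov_same, hcov_cross, hvar i t, hvar j t, hvar j s]
  rw [gt_iff_lt, div_lt_div_iff₀ (by positivity) (by positivity)]
  have hVteq : Vt = Real.sqrt Vt * Real.sqrt Vt := (Real.mul_self_sqrt hVt_pos.le).symm
  calc N2 * (Real.sqrt Vt * Real.sqrt Vt)
      = (N2 * Real.sqrt Vt) * Real.sqrt Vt := by ring
    _ < (N1 * Real.sqrt Vs) * Real.sqrt Vt := by
        exact mul_lt_mul_of_pos_right hkey hsVt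
    _ = N1 * (Real.sqrt Vt * Real.sqrt Vs) := by ring
end

section
/- In the first-order polynomial DLM, for distinct sites i ≠ j and any fixed time t ≥ 1, the cross-time correlation Cor(y_{it}, y_{js}), viewed as a function of s, attains its maximum at s = t and decreases as |s − t| increases: if s1, s2 ≥ 1 with |t − s1| < |t − s2| and s1, s2 lie on the same side of t (both < t or both > t), then Cor(y_{it}, y_{js1}) > Cor(y_{it}, y_{js2}); equivalently, the difference Cor(y_{it}, y_{jt}) − Cor(y_{it}, y_{js}) is a monotone increasing function of |t − s|. -/
open MeasureTheory Filter

set_option linter.unusedSectionVars false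

section helpers
variable {Ω : Type*} [MeasurableSpace Ω] {μ : Measure Ω} [IsFiniteMeasure μ]

lemma my_int_mul {f g : Ω → ℝ} (hf : MemLp f 2 μ) (hg : MemLp g 2 μ) :
    Integrable (fun ω => f ω * g ω) μ := by
  have h : MemLp (f • g) 1 μ := by
    haveI : ENNReal.HolderTriple 2 2 1 := ⟨by simp [ENNReal.inv_two_add_inv_two]⟩
    exact hg.smul hf
  simpa [smul_eq_mul, Pi.mul_def] using memLp_one_iff_integrable.mp h

lemma my_cov_symm (μ : Measure Ω) (X Y : Ω → ℝ) : cov μ X Y = cov μ Y X := by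
  unfold cov
  rw [show (∫ ω, X ω * Y ω ∂μ) = ∫ ω, Y ω * X ω ∂μ from by congr 1; funext ω; ring]
  ring

lemma my_cov_add_left {X X' Y : Ω → ℝ} (hX : MemLp X 2 μ) (hX' : MemLp X' 2 μ)
    (hY : MemLp Y 2 μ) :
    cov μ (fun ω => X ω + X' ω) Y = cov μ X Y + cov μ X' Y := by
  unfold cov
  have h1 : ∫ ω, (X ω + X' ω) * Y ω ∂μ = ∫ ω, (X ω * Y ω + X' ω * Y ω) ∂μ := by
    congr 1; funext ω; ring
  rw [h1, integral_add (my_int_mul hX hY) (my_int_mul hX' hY),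
    integral_add (hX.integrable one_le_two) (hX'.integrable one_le_two)]
  ring

lemma my_cov_add_right {X Y Y' : Ω → ℝ} (hX : MemLp X 2 μ) (hY : MemLp Y 2 μ)
    (hY' : MemLp Y' 2 μ) :
    cov μ X (fun ω => Y ω + Y' ω) = cov μ X Y + cov μ X Y' := by
  rw [my_cov_symm, my_cov_add_left hY hY' hX, my_cov_symm μ Y X, my_cov_symm μ Y' X]

lemma my_cov_sum_left {ι : Type*} {A : Finset ι} {X : ι → Ω → ℝ} {Y : Ω → ℝ}
    (hX : ∀ k ∈ A, MemLp (X k) 2 μ) (hY : MemLp Y 2 μ) :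
    cov μ (fun ω => ∑ k ∈ A, X k ω) Y = ∑ k ∈ A, cov μ (X k) Y := by
  unfold cov
  have h1 : ∫ ω, (∑ k ∈ A, X k ω) * Y ω ∂μ = ∑ k ∈ A, ∫ ω, X k ω * Y ω ∂μ := by
    rw [← integral_finset_sum A (fun k hk => my_int_mul (hX k hk) hY)]
    congr 1; funext ω; rw [Finset.sum_mul]
  have h2 : ∫ ω, (∑ k ∈ A, X k ω) ∂μ = ∑ k ∈ A, ∫ ω, X k ω ∂μ :=
    integral_finset_sum A (fun k hk => (hX k hk).integrable one_le_two)
  rw [h1, h2, Finset.sum_mul, ← Finset.sum_sub_distrib]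

lemma my_cov_sum_right {ι : Type*} {A : Finset ι} {X : Ω → ℝ} {Y : ι → Ω → ℝ}
    (hX : MemLp X 2 μ) (hY : ∀ k ∈ A, MemLp (Y k) 2 μ) :
    cov μ X (fun ω => ∑ k ∈ A, Y k ω) = ∑ k ∈ A, cov μ X (Y k) := by
  rw [my_cov_symm, my_cov_sum_left hY hX]
  exact Finset.sum_congr rfl fun k _ => my_cov_symm μ (Y k) X

lemma my_cov_triple {a b c a' b' c' : Ω → ℝ}
    (ha : MemLp a 2 μ) (hb : MemLp b 2 μ) (hc : MemLp c 2 μ)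
    (ha' : MemLp a' 2 μ) (hb' : MemLp b' 2 μ) (hc' : MemLp c' 2 μ) :
    cov μ (fun ω => a ω + b ω + c ω) (fun ω => a' ω + b' ω + c' ω) =
      cov μ a a' + cov μ a b' + cov μ a c' + cov μ b a' + cov μ b b' + cov μ b c' +
        cov μ c a' + cov μ c b' + cov μ c c' := by
  have hab : MemLp (fun ω => a ω + b ω) 2 μ := by simpa [Pi.add_def] using ha.add hb
  have hab' : MemLp (fun ω => a' ω + b' ω) 2 μ := by simpa [Pi.add_def] using ha'.add hb'
  have hR : MemLp (fun ω => a' ω + b' ω + c' ω) 2 μ := by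
    simpa [Pi.add_def] using (ha'.add hb').add hc'
  rw [my_cov_add_left hab hc hR, my_cov_add_left ha hb hR,
    my_cov_add_right ha hab' hc', my_cov_add_right ha ha' hb',
    my_cov_add_right hb hab' hc', my_cov_add_right hb ha' hb',
    my_cov_add_right hc hab' hc', my_cov_add_right hc ha' hb']
  ring

end helpers


lemma my_dlm_cov {Ω : Type*} [MeasurableSpace Ω] (μ : Measure Ω) [IsProbabilityMeasure μ]
    (n : ℕ) (sb2 sd2 se2 lam : ℝ)
    (β0 : Ω → ℝ) (δ : ℕ → Ω → ℝ) (ε : Fin (n + 1) → ℕ → Ω → ℝ)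
    (d : Fin (n + 1) → Fin (n + 1) → ℝ)
    (hβL2 : MemLp β0 2 μ) (hδL2 : ∀ k, MemLp (δ k) 2 μ)
    (hεL2 : ∀ i t, MemLp (ε i t) 2 μ)
    (hβvar : cov μ β0 β0 = sb2)
    (hδvar : ∀ k, cov μ (δ k) (δ k) = sd2)
    (hεcov : ∀ i j t, cov μ (ε i t) (ε j t) = se2 * Real.exp (-(d i j) / lam))
    (hβδ : ∀ k, cov μ β0 (δ k) = 0)
    (hδδ : ∀ k l, k ≠ l → cov μ (δ k) (δ l) = 0)
    (hβε : ∀ i t, cov μ β0 (ε i t) = 0)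
    (hδε : ∀ k i t, cov μ (δ k) (ε i t) = 0)
    (hεε : ∀ i j t s, t ≠ s → cov μ (ε i t) (ε j s) = 0)
    (y : Fin (n + 1) → ℕ → Ω → ℝ)
    (hy : ∀ i t ω, y i t ω = β0 ω + (∑ k ∈ Finset.Icc 1 t, δ k ω) + ε i t ω) :
    ∀ i j t s, cov μ (y i t) (y j s) =
      sb2 + sd2 * ((min t s : ℕ) : ℝ) +
        (if t = s then se2 * Real.exp (-(d i j) / lam) else 0) := by
  intro i j t s
  have hyfun : ∀ i t, y i t =
      fun ω => β0 ω + (∑ k ∈ Finset.Icc 1 t, δ k ω) + ε i t ω := by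
    intro i t; funext ω; rw [hy]
  have hSL2 : ∀ t, MemLp (fun ω => ∑ k ∈ Finset.Icc 1 t, δ k ω) 2 μ := fun t =>
    memLp_finset_sum _ (fun k _ => hδL2 k)
  rw [hyfun i t, hyfun j s,
    my_cov_triple hβL2 (hSL2 t) (hεL2 i t) hβL2 (hSL2 s) (hεL2 j s)]
  have h1 : cov μ β0 (fun ω => ∑ k ∈ Finset.Icc 1 s, δ k ω) = 0 := by
    rw [my_cov_sum_right hβL2 (fun k _ => hδL2 k)]
    exact Finset.sum_eq_zero fun k _ => hβδ k
  have h2 : cov μ (fun ω => ∑ k ∈ Finset.Icc 1 t, δ k ω) β0 = 0 := by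
    rw [my_cov_sum_left (fun k _ => hδL2 k) hβL2]
    exact Finset.sum_eq_zero fun k _ => (my_cov_symm μ (δ k) β0) ▸ hβδ k
  have h3 : cov μ (fun ω => ∑ k ∈ Finset.Icc 1 t, δ k ω) (ε j s) = 0 := by
    rw [my_cov_sum_left (fun k _ => hδL2 k) (hεL2 j s)]
    exact Finset.sum_eq_zero fun k _ => hδε k j s
  have h4 : cov μ (ε i t) (fun ω => ∑ k ∈ Finset.Icc 1 s, δ k ω) = 0 := by
    rw [my_cov_sum_right (hεL2 i t) (fun k _ => hδL2 k)]
    exact Finset.sum_eq_zero fun k _ => (my_cov_symm μ (δ k) (ε i t)) ▸ hδε k i t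
  have h5 : cov μ (fun ω => ∑ k ∈ Finset.Icc 1 t, δ k ω)
      (fun ω => ∑ k ∈ Finset.Icc 1 s, δ k ω) = sd2 * ((min t s : ℕ) : ℝ) := by
    rw [my_cov_sum_left (fun k _ => hδL2 k) (hSL2 s)]
    have inner : ∀ k, cov μ (δ k) (fun ω => ∑ l ∈ Finset.Icc 1 s, δ l ω) =
        if k ∈ Finset.Icc 1 s then sd2 else 0 := by
      intro k
      rw [my_cov_sum_right (hδL2 k) (fun l _ => hδL2 l)]
      rw [Finset.sum_congr rfl (fun l _ => show cov μ (δ k) (δ l) =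
        if k = l then sd2 else 0 by
          by_cases h : k = l
          · subst h; simp [hδvar k]
          · simp [h, hδδ k l h])]
      simp [Finset.sum_ite_eq]
    rw [Finset.sum_congr rfl (fun k _ => inner k), Finset.sum_ite_mem,
      show Finset.Icc 1 t ∩ Finset.Icc 1 s = Finset.Icc 1 (min t s) from by
        ext x; simp only [Finset.mem_inter, Finset.mem_Icc]; omega,
      Finset.sum_const, Nat.card_Icc]
    simp [nsmul_eq_mul, mul_comm]
  have h6 : cov μ (ε i t) (ε j s) =
      if t = s then se2 * Real.exp (-(d i j) / lam) else 0 := by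
    by_cases h : t = s
    · subst h; simp [hεcov i j t]
    · simp [h, hεε i j t s h]
  have h7 : cov μ (ε i t) β0 = 0 := by rw [my_cov_symm]; exact hβε i t
  rw [h1, h2, h3, h4, h5, h6, h7, hβvar, hβε j s]
  ring



/-- In the first-order polynomial DLM, for distinct sites `i ≠ j` and fixed time
`t ≥ 1`, the cross-time correlation `Cor(y_{it}, y_{js})` as a function of `s` decreases as
`|s − t|` increases: if `s1, s2 ≥ 1` lie on the same side of `t` with `|t − s1| < |t − s2|`,
then `Cor(y_{it}, y_{js1}) > Cor(y_{it}, y_{js2})`. -/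
theorem cross_time_correlation_decreasing
    {Ω : Type*} [MeasurableSpace Ω] (μ : Measure Ω) [IsProbabilityMeasure μ]
    (n : ℕ) (sb2 sd2 se2 lam : ℝ)
    (hb : 0 < sb2) (hd : 0 < sd2) (he : 0 < se2) (hl : 0 < lam)
    (β0 : Ω → ℝ) (δ : ℕ → Ω → ℝ) (ε : Fin (n + 1) → ℕ → Ω → ℝ)
    (d : Fin (n + 1) → Fin (n + 1) → ℝ)
    (hdsymm : ∀ i j, d i j = d j i) (hdnonneg : ∀ i j, 0 ≤ d i j)
    (hddiag : ∀ i, d i i = 0)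
    (hβL2 : MemLp β0 2 μ) (hδL2 : ∀ k, MemLp (δ k) 2 μ)
    (hεL2 : ∀ i t, MemLp (ε i t) 2 μ)
    (hβmean : (∫ ω, β0 ω ∂μ) = 0) (hδmean : ∀ k, (∫ ω, δ k ω ∂μ) = 0)
    (hεmean : ∀ i t, (∫ ω, ε i t ω ∂μ) = 0)
    (hβvar : cov μ β0 β0 = sb2)
    (hδvar : ∀ k, cov μ (δ k) (δ k) = sd2)
    (hεcov : ∀ i j t, cov μ (ε i t) (ε j t) = se2 * Real.exp (-(d i j) / lam))
    (hβδ : ∀ k, cov μ β0 (δ k) = 0)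
    (hδδ : ∀ k l, k ≠ l → cov μ (δ k) (δ l) = 0)
    (hβε : ∀ i t, cov μ β0 (ε i t) = 0)
    (hδε : ∀ k i t, cov μ (δ k) (ε i t) = 0)
    (hεε : ∀ i j t s, t ≠ s → cov μ (ε i t) (ε j s) = 0)
    (y : Fin (n + 1) → ℕ → Ω → ℝ)
    (hy : ∀ i t ω, y i t ω = β0 ω + (∑ k ∈ Finset.Icc 1 t, δ k ω) + ε i t ω) :
    ∀ (i j : Fin (n + 1)), i ≠ j → ∀ (t : ℕ), 1 ≤ t →
      ∀ (s1 s2 : ℕ), 1 ≤ s1 → 1 ≤ s2 →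
        |(t : ℤ) - (s1 : ℤ)| < |(t : ℤ) - (s2 : ℤ)| →
        ((s1 < t ∧ s2 < t) ∨ (t < s1 ∧ t < s2)) →
        corr μ (y i t) (y j s1) > corr μ (y i t) (y j s2) := by
  intro i j hij t ht s1 s2 hs1 hs2 habs hside
  have key := my_dlm_cov μ n sb2 sd2 se2 lam β0 δ ε d hβL2 hδL2 hεL2 hβvar hδvar
    hεcov hβδ hδδ hβε hδε hεε y hy
  -- variances
  have var_eq : ∀ (i : Fin (n + 1)) (r : ℕ),
      cov μ (y i r) (y i r) = sb2 + sd2 * (r : ℝ) + se2 := by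
    intro i r
    have := key i i r r
    simp only [min_self, hddiag i, if_pos rfl] at this
    rw [this]
    norm_num
  have hVpos : ∀ (r : ℕ), 0 < sb2 + sd2 * (r : ℝ) + se2 := by
    intro r
    have : (0:ℝ) ≤ sd2 * (r : ℝ) := by positivity
    linarith
  have hsqrtpos : ∀ (r : ℕ), 0 < Real.sqrt (sb2 + sd2 * (r : ℝ) + se2) := fun r =>
    Real.sqrt_pos.mpr (hVpos r)
  rcases hside with ⟨h1t, h2t⟩ | ⟨ht1, ht2⟩
  · -- both below t : s2 < s1 < t
    have h1t' : (s1 : ℤ) < (t : ℤ) := by exact_mod_cast h1t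
    have h2t' : (s2 : ℤ) < (t : ℤ) := by exact_mod_cast h2t
    have e1 : |(t : ℤ) - (s1 : ℤ)| = (t : ℤ) - s1 := abs_of_pos (by linarith)
    have e2 : |(t : ℤ) - (s2 : ℤ)| = (t : ℤ) - s2 := abs_of_pos (by linarith)
    rw [e1, e2] at habs
    have hs21 : s2 < s1 := by omega
    have c1 : cov μ (y i t) (y j s1) = sb2 + sd2 * (s1 : ℝ) := by
      have := key i j t s1
      rw [if_neg (by omega), min_eq_right (le_of_lt h1t)] at this
      rw [this]; ring
    have c2 : cov μ (y i t) (y j s2) = sb2 + sd2 * (s2 : ℝ) := by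
      have := key i j t s2
      rw [if_neg (by omega), min_eq_right (le_of_lt h2t)] at this
      rw [this]; ring
    unfold corr
    rw [c1, c2, var_eq i t, var_eq j s1, var_eq j s2]
    rw [gt_iff_lt, div_lt_div_iff₀ (by positivity) (by positivity)]
    set A := Real.sqrt (sb2 + sd2 * (t : ℝ) + se2) with hA
    set B1 := Real.sqrt (sb2 + sd2 * (s1 : ℝ) + se2) with hB1
    set B2 := Real.sqrt (sb2 + sd2 * (s2 : ℝ) + se2) with hB2
    have hApos : 0 < A := hsqrtpos t
    have hB1pos : 0 < B1 := hsqrtpos s1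
    have hB2pos : 0 < B2 := hsqrtpos s2
    have hN2pos : 0 < sb2 + sd2 * (s2 : ℝ) := by
      have : (0:ℝ) ≤ sd2 * (s2:ℝ) := by positivity
      linarith
    have hNlt : sb2 + sd2 * (s2 : ℝ) < sb2 + sd2 * (s1 : ℝ) := by
      have : (s2 : ℝ) < (s1 : ℝ) := by exact_mod_cast hs21
      nlinarith
    have hkey : (sb2 + sd2 * (s2 : ℝ)) * B1 < (sb2 + sd2 * (s1 : ℝ)) * B2 := by
      apply lt_of_pow_lt_pow_left₀ 2 (by positivity)
      rw [mul_pow, mul_pow, hB1, hB2, Real.sq_sqrt (hVpos s1).le, Real.sq_sqrt (hVpos s2).le]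
      have hN1pos : 0 < sb2 + sd2 * (s1 : ℝ) := lt_trans hN2pos hNlt
      have hdiff : 0 < (sb2 + sd2 * (s1 : ℝ)) - (sb2 + sd2 * (s2 : ℝ)) := by linarith
      have key1 : 0 < (sb2 + sd2 * (s1 : ℝ)) * (sb2 + sd2 * (s2 : ℝ)) *
          ((sb2 + sd2 * (s1 : ℝ)) - (sb2 + sd2 * (s2 : ℝ))) := by positivity
      have key2 : 0 < se2 * (((sb2 + sd2 * (s1 : ℝ)) + (sb2 + sd2 * (s2 : ℝ))) *
          ((sb2 + sd2 * (s1 : ℝ)) - (sb2 + sd2 * (s2 : ℝ)))) := by positivity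
      nlinarith [key1, key2]
    calc (sb2 + sd2 * (s2 : ℝ)) * (A * B1) = A * ((sb2 + sd2 * (s2 : ℝ)) * B1) := by ring
      _ < A * ((sb2 + sd2 * (s1 : ℝ)) * B2) := by
          exact mul_lt_mul_of_pos_left hkey hApos
      _ = (sb2 + sd2 * (s1 : ℝ)) * (A * B2) := by ring
  · -- both above t : t < s1 < s2
    have ht1' : (t : ℤ) < (s1 : ℤ) := by exact_mod_cast ht1
    have ht2' : (t : ℤ) < (s2 : ℤ) := by exact_mod_cast ht2
    have e1 : |(t : ℤ) - (s1 : ℤ)| = (s1 : ℤ) - t := by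
      rw [abs_of_neg (by linarith)]; ring
    have e2 : |(t : ℤ) - (s2 : ℤ)| = (s2 : ℤ) - t := by
      rw [abs_of_neg (by linarith)]; ring
    rw [e1, e2] at habs
    have hs12 : s1 < s2 := by omega
    have c1 : cov μ (y i t) (y j s1) = sb2 + sd2 * (t : ℝ) := by
      have := key i j t s1
      rw [if_neg (by omega), min_eq_left (le_of_lt ht1)] at this
      rw [this]; ring
    have c2 : cov μ (y i t) (y j s2) = sb2 + sd2 * (t : ℝ) := by
      have := key i j t s2
      rw [if_neg (by omega), min_eq_left (le_of_lt ht2)] at this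
      rw [this]; ring
    unfold corr
    rw [c1, c2, var_eq i t, var_eq j s1, var_eq j s2]
    have hNpos : 0 < sb2 + sd2 * (t : ℝ) := by
      have : (0:ℝ) ≤ sd2 * (t:ℝ) := by positivity
      linarith
    apply div_lt_div_of_pos_left hNpos (by positivity)
    apply mul_lt_mul_of_pos_left _ (hsqrtpos t)
    apply Real.sqrt_lt_sqrt (hVpos s1).le
    have : (s1 : ℝ) < (s2 : ℝ) := by exact_mod_cast hs12
    nlinarith
end
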